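/- Decomposition for coordinatewise multiplicities: let (r₁,...,rₘ) ∈ ℕ₊ᵐ and suppose F ∈ F[x₁,...,xₘ] satisfies F^(j)(s) = 0 for all s ∈ S = S₁×···×Sₘ and all multiindices j = (j₁,...,jₘ) with j_k < r_k for all k. Then there exist H₁,...,Hₘ ∈ F[x₁,...,xₘ] with deg H_j + r_j·#S_j ≤ deg F, such that F = Σ_{j=1}^m H_j(x)·G_j(x_j)^{r_j}, where G_j(x_j) = ∏_{s∈S_j}(x_j−s). -/

import Mathlib

open MvPolynomial

/-- The `i`-th Hasse derivative of a multivariate polynomial, characterized by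
`F(x+z) = Σ_i F^(i)(x) z^i`. -/
noncomputable def mvHasseDeriv {K : Type*} [CommSemiring K] {σ : Type*}
    (i : σ →₀ ℕ) (F : MvPolynomial σ K) : MvPolynomial σ K :=
  (AddMonoidAlgebra.coeff F).sum fun k c => monomial (k - i) ((i.prod fun j ij => (k j).choose ij : ℕ) * c)

section Basic

variable {K : Type*} [Field K] {m : ℕ}

lemma mvHasseDeriv_monomial (i μ : Fin m →₀ ℕ) (c : K) :
    mvHasseDeriv i (monomial μ c) =
      monomial (μ - i) ((i.prod fun j ij => (μ j).choose ij : ℕ) * c) := by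
  unfold mvHasseDeriv
  rw [show AddMonoidAlgebra.coeff (monomial μ c) = Finsupp.single μ c from rfl]
  exact Finsupp.sum_single_index (by simp)

lemma mvHasseDeriv_add (i : Fin m →₀ ℕ) (p q : MvPolynomial (Fin m) K) :
    mvHasseDeriv i (p + q) = mvHasseDeriv i p + mvHasseDeriv i q := by
  unfold mvHasseDeriv
  rw [AddMonoidAlgebra.coeff_add]
  exact Finsupp.sum_add_index' (by simp) (by intros; rw [mul_add, map_add])

lemma mvHasseDeriv_smul (i : Fin m →₀ ℕ) (a : K) (p : MvPolynomial (Fin m) K) :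
    mvHasseDeriv i (a • p) = a • mvHasseDeriv i p := by
  unfold mvHasseDeriv
  rw [AddMonoidAlgebra.coeff_smul, Finsupp.sum_smul_index (by simp), Finsupp.smul_sum]
  apply Finsupp.sum_congr
  intro μ _
  rw [smul_monomial]
  congr 1
  rw [smul_eq_mul]
  ring

/-- `mvHasseDeriv` as a linear map. -/
noncomputable def mvD (i : Fin m →₀ ℕ) :
    MvPolynomial (Fin m) K →ₗ[K] MvPolynomial (Fin m) K where
  toFun := mvHasseDeriv i
  map_add' := mvHasseDeriv_add i
  map_smul' := mvHasseDeriv_smul i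

@[simp] lemma mvD_apply (i : Fin m →₀ ℕ) (p : MvPolynomial (Fin m) K) :
    mvD i p = mvHasseDeriv i p := rfl

lemma mvHasseDeriv_zero_index (p : MvPolynomial (Fin m) K) :
    mvHasseDeriv 0 p = p := by
  have : mvD (K := K) (0 : Fin m →₀ ℕ) p = p := by
    conv_lhs => rw [p.as_sum, map_sum]
    conv_rhs => rw [p.as_sum]
    apply Finset.sum_congr rfl
    intro μ _
    simp [mvHasseDeriv_monomial]
  simpa using this

lemma mvHasseDeriv_comp_single (k : Fin m) (t : ℕ) (jj : Fin m →₀ ℕ) (hk : jj k = 0)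
    (p : MvPolynomial (Fin m) K) :
    mvHasseDeriv (Finsupp.single k t) (mvHasseDeriv jj p)
      = mvHasseDeriv (jj + Finsupp.single k t) p := by
  have hmono : ∀ (μ : Fin m →₀ ℕ) (c : K),
      mvHasseDeriv (Finsupp.single k t) (mvHasseDeriv jj (monomial μ c))
        = mvHasseDeriv (jj + Finsupp.single k t) (monomial μ c) := by
    intro μ c
    rw [mvHasseDeriv_monomial, mvHasseDeriv_monomial, mvHasseDeriv_monomial]
    have hdis : Disjoint jj.support (Finsupp.single k t).support := by
      rw [Finset.disjoint_left]
      intro a ha hb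
      have hak : a = k := by
        have := Finsupp.support_single_subset hb; simpa using this
      subst hak
      exact (Finsupp.mem_support_iff.mp ha) hk
    rw [Finsupp.prod_add_index_of_disjoint hdis]
    rw [Finsupp.prod_single_index (by simp), Finsupp.prod_single_index (by simp)]
    rw [tsub_tsub]
    congr 1
    have h1 : (μ - jj) k = μ k := by
      rw [Finsupp.tsub_apply, hk, Nat.sub_zero]
    rw [h1]
    push_cast
    ring
  calc mvHasseDeriv (Finsupp.single k t) (mvHasseDeriv jj p)
      = mvD (Finsupp.single k t) (mvD jj (∑ μ ∈ p.support, monomial μ (coeff μ p))) := by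
        rw [← p.as_sum]; rfl
    _ = ∑ μ ∈ p.support,
          mvHasseDeriv (Finsupp.single k t) (mvHasseDeriv jj (monomial μ (coeff μ p))) := by
        rw [map_sum, map_sum]; rfl
    _ = ∑ μ ∈ p.support, mvHasseDeriv (jj + Finsupp.single k t) (monomial μ (coeff μ p)) :=
        Finset.sum_congr rfl fun μ _ => hmono μ _
    _ = mvD (jj + Finsupp.single k t) p := by
        simp only [← mvD_apply (jj + Finsupp.single k t)]
        rw [← map_sum, ← p.as_sum]
    _ = _ := rfl

lemma mvHasseDeriv_mul_right (jj : Fin m →₀ ℕ) (P Q : MvPolynomial (Fin m) K)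
    (hQ : ∀ j ∈ jj.support, degreeOf j Q = 0) :
    mvHasseDeriv jj (P * Q) = mvHasseDeriv jj P * Q := by
  have hmono : ∀ (μ : Fin m →₀ ℕ) (c : K) (ν : Fin m →₀ ℕ) (d : K), ν ∈ Q.support →
      mvHasseDeriv jj (monomial μ c * monomial ν d)
        = mvHasseDeriv jj (monomial μ c) * monomial ν d := by
    intro μ c ν d hν
    have hν0 : ∀ j ∈ jj.support, ν j = 0 := by
      intro j hj
      have := MvPolynomial.degreeOf_le_iff.mp (le_of_eq (hQ j hj)) ν hν
      omega
    rw [monomial_mul, mvHasseDeriv_monomial, mvHasseDeriv_monomial, monomial_mul]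
    have hexp : (μ + ν) - jj = (μ - jj) + ν := by
      ext j
      simp only [Finsupp.tsub_apply, Finsupp.add_apply]
      by_cases hj : j ∈ jj.support
      · have := hν0 j hj; omega
      · have : jj j = 0 := Finsupp.notMem_support_iff.mp hj
        omega
    have hch : (jj.prod fun j ij => ((μ + ν) j).choose ij)
        = jj.prod fun j ij => (μ j).choose ij := by
      apply Finsupp.prod_congr
      intro j hj
      have := hν0 j hj
      simp [Finsupp.add_apply, this]
    rw [hexp, hch, mul_assoc]
  calc mvHasseDeriv jj (P * Q)
      = mvD jj ((∑ μ ∈ P.support, monomial μ (coeff μ P)) *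
          (∑ ν ∈ Q.support, monomial ν (coeff ν Q))) := by
        rw [← P.as_sum, ← Q.as_sum]; rfl
    _ = ∑ μ ∈ P.support, ∑ ν ∈ Q.support,
          mvHasseDeriv jj (monomial μ (coeff μ P) * monomial ν (coeff ν Q)) := by
        rw [Finset.sum_mul_sum, map_sum]
        refine Finset.sum_congr rfl fun μ _ => ?_
        rw [map_sum]; rfl
    _ = ∑ μ ∈ P.support, ∑ ν ∈ Q.support,
          mvHasseDeriv jj (monomial μ (coeff μ P)) * monomial ν (coeff ν Q) :=
        Finset.sum_congr rfl fun μ _ => Finset.sum_congr rfl fun ν hν => hmono _ _ _ _ hν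
    _ = (∑ μ ∈ P.support, mvHasseDeriv jj (monomial μ (coeff μ P))) *
          (∑ ν ∈ Q.support, monomial ν (coeff ν Q)) := by
        rw [Finset.sum_mul_sum]
    _ = mvD jj P * Q := by
        simp only [← mvD_apply jj]
        rw [← map_sum, ← P.as_sum, ← Q.as_sum]
    _ = _ := rfl

lemma mvHasseDeriv_support (jj : Fin m →₀ ℕ) (p : MvPolynomial (Fin m) K) :
    ∀ ν ∈ (mvHasseDeriv jj p).support, ∃ μ ∈ p.support, ν = μ - jj := by
  intro ν hν
  have hsub := MvPolynomial.support_sum (s := p.support)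
    (f := fun μ => (monomial (μ - jj) ((jj.prod fun j ij => (μ j).choose ij : ℕ) * coeff μ p)
      : MvPolynomial (Fin m) K)) hν
  obtain ⟨μ, hμ, hmem⟩ := Finset.mem_biUnion.mp hsub
  refine ⟨μ, hμ, ?_⟩
  have := MvPolynomial.mem_support_iff.mp hmem
  rw [MvPolynomial.coeff_monomial] at this
  by_contra hne
  exact this (if_neg (by exact fun h => hne h.symm))

lemma degreeOf_mvHasseDeriv_le (k : Fin m) (jj : Fin m →₀ ℕ) (p : MvPolynomial (Fin m) K) :
    degreeOf k (mvHasseDeriv jj p) ≤ degreeOf k p := by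
  rw [MvPolynomial.degreeOf_le_iff]
  intro ν hν
  obtain ⟨μ, hμ, rfl⟩ := mvHasseDeriv_support jj p ν hν
  calc (μ - jj) k ≤ μ k := by rw [Finsupp.tsub_apply]; omega
    _ ≤ degreeOf k p := MvPolynomial.monomial_le_degreeOf k hμ
end Basic

section Theta

variable {K : Type*} [Field K] {m : ℕ}

/-- View a multivariate polynomial as a univariate polynomial in variable `k`,
with coefficients multivariate polynomials (not involving `k`). -/
noncomputable def theta (k : Fin m) :
    MvPolynomial (Fin m) K →ₐ[K] Polynomial (MvPolynomial (Fin m) K) :=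
  aeval (fun j => if j = k then Polynomial.X else Polynomial.C (X j))

/-- Partial evaluation: substitute `s j` for variables `j ∈ T`, keep others. -/
noncomputable def pe (T : Finset (Fin m)) (s : Fin m → K) :
    MvPolynomial (Fin m) K →ₐ[K] MvPolynomial (Fin m) K :=
  aeval (fun j => if j ∈ T then C (s j) else X j)

lemma theta_section (k : Fin m) (p : MvPolynomial (Fin m) K) :
    Polynomial.eval (X k) (theta k p) = p := by
  have h : (Polynomial.evalRingHom (X k : MvPolynomial (Fin m) K)).comp
      (theta k).toRingHom = RingHom.id _ := by
    apply MvPolynomial.ringHom_ext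
    · intro c; simp [theta]
    · intro j; by_cases h : j = k <;> simp [theta, h]
  exact RingHom.congr_fun h p

lemma theta_injective (k : Fin m) : Function.Injective (theta (K := K) k) := by
  intro p q h
  have := congrArg (Polynomial.eval (X k : MvPolynomial (Fin m) K)) h
  rwa [theta_section, theta_section] at this

lemma theta_monomial (k : Fin m) (μ : Fin m →₀ ℕ) (c : K) :
    theta k (monomial μ c)
      = Polynomial.C (monomial (μ.erase k) c) * Polynomial.X ^ (μ k) := by
  rw [theta, aeval_monomial]
  have hdis : Disjoint (μ.erase k).support (Finsupp.single k (μ k)).support := by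
    rw [Finset.disjoint_left]
    intro a ha hb
    have hak : a = k := by have := Finsupp.support_single_subset hb; simpa using this
    rw [Finsupp.support_erase] at ha
    exact (Finset.notMem_erase k _) (hak ▸ ha)
  conv_lhs => rw [← Finsupp.erase_add_single k μ]
  rw [Finsupp.prod_add_index_of_disjoint hdis]
  rw [Finsupp.prod_single_index (by simp)]
  have herase : ((μ.erase k).prod fun j e =>
      (if j = k then (Polynomial.X : Polynomial (MvPolynomial (Fin m) K))
        else Polynomial.C (X j)) ^ e)
      = Polynomial.C ((μ.erase k).prod fun j e => (X j) ^ e) := by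
    rw [Finsupp.prod, Finsupp.prod, map_prod]
    apply Finset.prod_congr rfl
    intro j hj
    rw [Finsupp.support_erase] at hj
    have hjk : j ≠ k := Finset.ne_of_mem_erase hj
    rw [if_neg hjk, map_pow]
  rw [herase, if_pos rfl]
  rw [MvPolynomial.monomial_eq, map_mul]
  have halg : algebraMap K (Polynomial (MvPolynomial (Fin m) K)) c
      = Polynomial.C (C c) := by
    rw [Polynomial.algebraMap_apply, MvPolynomial.algebraMap_eq]
  rw [halg]
  ring

lemma theta_hasseDeriv (k : Fin m) (t : ℕ) (p : MvPolynomial (Fin m) K) :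
    theta k (mvHasseDeriv (Finsupp.single k t) p)
      = Polynomial.hasseDeriv t (theta k p) := by
  have hmono : ∀ (μ : Fin m →₀ ℕ) (c : K),
      theta k (mvHasseDeriv (Finsupp.single k t) (monomial μ c))
        = Polynomial.hasseDeriv t (theta k (monomial μ c)) := by
    intro μ c
    rw [mvHasseDeriv_monomial, Finsupp.prod_single_index (by simp)]
    rw [theta_monomial, theta_monomial]
    have he : (μ - Finsupp.single k t).erase k = μ.erase k := by
      ext j
      by_cases hj : j = k
      · simp [hj]
      · have hkj : ¬ k = j := fun h => hj h.symm
        simp [Finsupp.erase_ne hj, Finsupp.tsub_apply, Finsupp.single_apply, hkj]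
    rw [he]
    have hk2 : (μ - Finsupp.single k t) k = μ k - t := by
      simp [Finsupp.tsub_apply]
    rw [hk2]
    have hX : (Polynomial.X : Polynomial (MvPolynomial (Fin m) K)) ^ (μ k)
        = Polynomial.monomial (μ k) 1 := by
      exact Polynomial.X_pow_eq_monomial _
    rw [show Polynomial.C (monomial (μ.erase k) c) *
          (Polynomial.X : Polynomial (MvPolynomial (Fin m) K)) ^ (μ k)
        = monomial (μ.erase k) c •
            ((Polynomial.X : Polynomial (MvPolynomial (Fin m) K)) ^ (μ k))
        from (Polynomial.smul_eq_C_mul _).symm]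
    rw [LinearMap.map_smul, hX, Polynomial.hasseDeriv_monomial, mul_one,
      Polynomial.smul_eq_C_mul, ← Polynomial.C_mul_X_pow_eq_monomial]
    rw [show (monomial (μ.erase k)) ((((μ k).choose t : ℕ) : K) * c)
        = C (((μ k).choose t : ℕ) : K) * monomial (μ.erase k) c from
        (C_mul_monomial ..).symm, map_mul]
    have hcast : (Polynomial.C (C ((((μ k).choose t : ℕ) : K)) : MvPolynomial (Fin m) K))
        = Polynomial.C ((((μ k).choose t : ℕ) : MvPolynomial (Fin m) K)) := by
      norm_cast
    rw [hcast]
    ring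
  calc theta k (mvHasseDeriv (Finsupp.single k t) p)
      = theta k (mvD (Finsupp.single k t) (∑ μ ∈ p.support, monomial μ (coeff μ p))) := by
        rw [← p.as_sum]; rfl
    _ = ∑ μ ∈ p.support, theta k (mvHasseDeriv (Finsupp.single k t) (monomial μ (coeff μ p))) := by
        rw [map_sum, map_sum]; rfl
    _ = ∑ μ ∈ p.support, Polynomial.hasseDeriv t (theta k (monomial μ (coeff μ p))) :=
        Finset.sum_congr rfl fun μ _ => hmono μ _
    _ = Polynomial.hasseDeriv t (theta k p) := by
        rw [← map_sum, ← map_sum, ← p.as_sum]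

lemma natDegree_theta_le (k : Fin m) (p : MvPolynomial (Fin m) K) :
    (theta k p).natDegree ≤ degreeOf k p := by
  conv_lhs => rw [p.as_sum, map_sum]
  refine Polynomial.natDegree_sum_le_of_forall_le _ _ fun μ hμ => ?_
  rw [theta_monomial]
  refine le_trans (Polynomial.natDegree_C_mul_le _ _) ?_
  rw [Polynomial.natDegree_X_pow]
  exact MvPolynomial.monomial_le_degreeOf k hμ

lemma theta_coeff_support (k : Fin m) (p : MvPolynomial (Fin m) K) (i : ℕ) :
    ∀ ν ∈ ((theta k p).coeff i).support, ∃ μ ∈ p.support, μ k = i ∧ ν = μ.erase k := by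
  intro ν hν
  have hrw : (theta k p).coeff i
      = ∑ μ ∈ p.support, if μ k = i then monomial (μ.erase k) (coeff μ p) else 0 := by
    conv_lhs => rw [p.as_sum, map_sum, Polynomial.finset_sum_coeff]
    apply Finset.sum_congr rfl
    intro μ _
    rw [theta_monomial, Polynomial.coeff_C_mul, Polynomial.coeff_X_pow]
    by_cases h : μ k = i
    · simp [h]
    · rw [if_neg h, if_neg (fun hh : i = μ k => h hh.symm), mul_zero]
  rw [hrw] at hν
  have hsub := MvPolynomial.support_sum (s := p.support)
    (f := fun μ => if μ k = i then monomial (μ.erase k) (coeff μ p) else 0) hν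
  obtain ⟨μ, hμ, hmem⟩ := Finset.mem_biUnion.mp hsub
  by_cases h : μ k = i
  · refine ⟨μ, hμ, h, ?_⟩
    simp only [if_pos h] at hmem
    have hc := MvPolynomial.mem_support_iff.mp hmem
    rw [MvPolynomial.coeff_monomial] at hc
    by_contra hne
    exact hc (if_neg fun hh => hne hh.symm)
  · simp only [if_neg h, MvPolynomial.support_zero] at hmem
    exact absurd hmem (Finset.notMem_empty ν)

lemma theta_coeff_totalDegree (k : Fin m) (p : MvPolynomial (Fin m) K) (i : ℕ) :
    (theta k p).coeff i = 0 ∨ ((theta k p).coeff i).totalDegree + i ≤ p.totalDegree := by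
  by_cases h : (theta k p).coeff i = 0
  · exact Or.inl h
  right
  have hne : ((theta k p).coeff i).support.Nonempty := by
    rw [Finset.nonempty_iff_ne_empty]
    intro hh
    exact h (MvPolynomial.support_eq_empty.mp hh)
  obtain ⟨ν, hν, heq⟩ := Finset.exists_mem_eq_sup _ hne
    (fun ν : Fin m →₀ ℕ => ν.sum fun _ e => e)
  obtain ⟨μ, hμ, hki, hνe⟩ := theta_coeff_support k p i ν hν
  have hsum : ((μ.erase k).sum fun _ e => e) + μ k = μ.sum fun _ e => e := by
    conv_rhs => rw [← Finsupp.erase_add_single k μ]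
    rw [Finsupp.sum_add_index' (fun _ => rfl) (fun _ _ _ => rfl),
      Finsupp.sum_single_index rfl]
  calc ((theta k p).coeff i).totalDegree + i
      = ((μ.erase k).sum fun _ e => e) + μ k := by
        rw [MvPolynomial.totalDegree, heq, hνe, ← hki]
    _ = μ.sum fun _ e => e := hsum
    _ ≤ p.totalDegree := MvPolynomial.le_totalDegree hμ

lemma theta_coeff_degreeOf_self (k : Fin m) (p : MvPolynomial (Fin m) K) (i : ℕ) :
    degreeOf k ((theta k p).coeff i) = 0 := by
  refine Nat.eq_zero_of_le_zero (MvPolynomial.degreeOf_le_iff.mpr ?_)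
  intro ν hν
  obtain ⟨μ, _, _, rfl⟩ := theta_coeff_support k p i ν hν
  simp [Finsupp.erase_same]

lemma theta_coeff_degreeOf_ne (k j : Fin m) (h : j ≠ k) (p : MvPolynomial (Fin m) K) (i : ℕ) :
    degreeOf j ((theta k p).coeff i) ≤ degreeOf j p := by
  refine MvPolynomial.degreeOf_le_iff.mpr ?_
  intro ν hν
  obtain ⟨μ, hμ, _, rfl⟩ := theta_coeff_support k p i ν hν
  rw [Finsupp.erase_ne h]
  exact MvPolynomial.monomial_le_degreeOf j hμ

lemma hasseDeriv_map {R S : Type*} [CommSemiring R] [CommSemiring S] (f : R →+* S)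
    (t : ℕ) (p : Polynomial R) :
    Polynomial.hasseDeriv t (p.map f) = (Polynomial.hasseDeriv t p).map f := by
  ext n
  rw [Polynomial.hasseDeriv_coeff, Polynomial.coeff_map, Polynomial.coeff_map,
    Polynomial.hasseDeriv_coeff, map_mul, map_natCast]

lemma theta_comm_pe (k : Fin m) (T : Finset (Fin m)) (hk : k ∉ T) (s : Fin m → K)
    (p : MvPolynomial (Fin m) K) :
    theta k (pe T s p) = Polynomial.map (pe T s).toRingHom (theta k p) := by
  have h : ((theta k).toRingHom.comp (pe T s).toRingHom)
      = (Polynomial.mapRingHom (pe T s).toRingHom).comp (theta k).toRingHom := by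
    apply MvPolynomial.ringHom_ext
    · intro c; simp [theta, pe]
    · intro j
      by_cases hj : j = k
      · subst hj
        simp [theta, pe, if_neg hk]
      · by_cases hjT : j ∈ T <;> simp [theta, pe, hj, hjT]
  exact RingHom.congr_fun h p

lemma pe_insert_eval (k : Fin m) (T : Finset (Fin m)) (hk : k ∉ T) (s : Fin m → K) (a : K)
    (p : MvPolynomial (Fin m) K) :
    Polynomial.eval (C a : MvPolynomial (Fin m) K)
        (Polynomial.map (pe T s).toRingHom (theta k p))
      = pe (insert k T) (Function.update s k a) p := by
  have h : ((Polynomial.evalRingHom (C a : MvPolynomial (Fin m) K)).comp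
      ((Polynomial.mapRingHom (pe T s).toRingHom).comp (theta k).toRingHom))
      = (pe (insert k T) (Function.update s k a)).toRingHom := by
    apply MvPolynomial.ringHom_ext
    · intro c; simp [theta, pe]
    · intro j
      by_cases hj : j = k
      · subst hj
        simp [theta, pe, Function.update_self]
      · by_cases hjT : j ∈ T
        · simp [theta, pe, hj, hjT, Function.update_of_ne hj]
        · have : j ∉ insert k T := by simp [hj, hjT]
          simp [theta, pe, hj, hjT, this, Function.update_of_ne hj]
  exact RingHom.congr_fun h p

lemma eval_theta (k : Fin m) (s : Fin m → K) (p : MvPolynomial (Fin m) K) :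
    eval s p = Polynomial.eval (s k)
      (Polynomial.map (eval s : MvPolynomial (Fin m) K →+* K) (theta k p)) := by
  have h : ((Polynomial.evalRingHom (s k)).comp
      ((Polynomial.mapRingHom (eval s : MvPolynomial (Fin m) K →+* K)).comp
        (theta k).toRingHom)) = (eval s : MvPolynomial (Fin m) K →+* K) := by
    apply MvPolynomial.ringHom_ext
    · intro c; simp [theta]
    · intro j
      by_cases hj : j = k <;> simp [theta, hj]
  exact (RingHom.congr_fun h p).symm

lemma pe_univ (s : Fin m → K) (p : MvPolynomial (Fin m) K) :
    pe Finset.univ s p = C (eval s p) := by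
  have h : (pe (m := m) Finset.univ s).toRingHom
      = (C : K →+* MvPolynomial (Fin m) K).comp (eval s : MvPolynomial (Fin m) K →+* K) := by
    apply MvPolynomial.ringHom_ext
    · intro c; simp [pe]
    · intro j; simp [pe]
  exact RingHom.congr_fun h p

lemma pe_empty (s : Fin m → K) (p : MvPolynomial (Fin m) K) :
    pe ∅ s p = p := by
  have : pe (m := m) ∅ s = aeval X := by
    unfold pe
    congr 1
  rw [this, aeval_X_left_apply]

end Theta

section Division

variable {K : Type*} [Field K] {m : ℕ}

lemma divP (gK : Polynomial K) (hg : gK.Monic) :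
    ∀ (n : ℕ) (p : Polynomial (MvPolynomial (Fin m) K)), p.natDegree < n →
    ∃ q rem : Polynomial (MvPolynomial (Fin m) K),
      p = q * gK.map (C : K →+* MvPolynomial (Fin m) K) + rem ∧
      rem.degree < (gK.natDegree : WithBot ℕ) ∧
      (∀ i, q.coeff i ∈ Submodule.span K {x | ∃ i', i + gK.natDegree ≤ i' ∧ x = p.coeff i'}) ∧
      (∀ i, rem.coeff i ∈ Submodule.span K {x | ∃ i', i ≤ i' ∧ x = p.coeff i'}) := by
  intro n
  induction n with
  | zero => intro p hp; omega
  | succ n IH =>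
    intro p hp
    have hgmonic : (gK.map (C : K →+* MvPolynomial (Fin m) K)).Monic := hg.map _
    have hgnd : (gK.map (C : K →+* MvPolynomial (Fin m) K)).natDegree = gK.natDegree :=
      hg.natDegree_map _
    set g : Polynomial (MvPolynomial (Fin m) K) := gK.map C with hgdef
    by_cases hdeg : p.degree < g.degree
    · refine ⟨0, p, by ring, ?_, ?_, ?_⟩
      · rwa [Polynomial.degree_eq_natDegree hgmonic.ne_zero, hgnd] at hdeg
      · intro i; rw [Polynomial.coeff_zero]; exact Submodule.zero_mem _
      · intro i; exact Submodule.subset_span ⟨i, le_rfl, rfl⟩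
    · push_neg at hdeg
      have hp0 : p ≠ 0 := by
        intro h0
        rw [h0, Polynomial.degree_zero] at hdeg
        exact hgmonic.ne_zero (Polynomial.degree_eq_bot.mp (le_bot_iff.mp hdeg))
      have hdn : gK.natDegree ≤ p.natDegree := by
        rw [← hgnd]; exact Polynomial.natDegree_le_natDegree hdeg
      set np := p.natDegree with hnp
      set j := np - gK.natDegree with hj
      set lc := p.leadingCoeff with hlc
      set t : Polynomial (MvPolynomial (Fin m) K) := Polynomial.C lc * Polynomial.X ^ j
        with ht
      have hlc0 : lc ≠ 0 := Polynomial.leadingCoeff_ne_zero.mpr hp0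
      have htg_deg : (t * g).degree = p.degree := by
        rw [Polynomial.degree_mul, ht, Polynomial.degree_C_mul_X_pow j hlc0,
          Polynomial.degree_eq_natDegree hgmonic.ne_zero, hgnd,
          Polynomial.degree_eq_natDegree hp0, ← Nat.cast_add]
        congr 1
        omega
      have htg_lc : (t * g).leadingCoeff = p.leadingCoeff := by
        rw [Polynomial.leadingCoeff_mul, hgmonic.leadingCoeff, mul_one, ht,
          Polynomial.leadingCoeff_C_mul_X_pow]
      have htg : ∀ i', (t * g).coeff i'
          = if j ≤ i' then gK.coeff (i' - j) • p.coeff np else 0 := by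
        intro i'
        have hre : t * g = (Polynomial.C lc * g) * Polynomial.X ^ j := by rw [ht]; ring
        rw [hre, Polynomial.coeff_mul_X_pow', Polynomial.coeff_C_mul, hgdef,
          Polynomial.coeff_map]
        by_cases hij : j ≤ i'
        · rw [if_pos hij, if_pos hij, MvPolynomial.smul_eq_C_mul, mul_comm, hlc,
            ← Polynomial.coeff_natDegree]
        · rw [if_neg hij, if_neg hij]
      set p' := p - t * g with hp'
      have hP' : ∀ i', p'.coeff i'
          ∈ Submodule.span K {x | ∃ i'', i' ≤ i'' ∧ x = p.coeff i''} := by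
        intro i'
        by_cases hi' : i' ≤ np
        · rw [hp', Polynomial.coeff_sub, htg i']
          by_cases hij : j ≤ i'
          · rw [if_pos hij]
            exact sub_mem (Submodule.subset_span ⟨i', le_rfl, rfl⟩)
              (Submodule.smul_mem _ _ (Submodule.subset_span ⟨np, hi', rfl⟩))
          · rw [if_neg hij, sub_zero]
            exact Submodule.subset_span ⟨i', le_rfl, rfl⟩
        · have hnd : p'.natDegree ≤ np := by
            refine le_trans (Polynomial.natDegree_sub_le _ _) ?_
            refine max_le le_rfl ?_
            exact Polynomial.natDegree_le_natDegree (le_of_eq htg_deg)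
          have h0 : p'.coeff i' = 0 :=
            Polynomial.coeff_eq_zero_of_natDegree_lt (by omega)
          rw [h0]
          exact Submodule.zero_mem _
      have htrans : ∀ i0 : ℕ,
          Submodule.span K {x | ∃ i', i0 ≤ i' ∧ x = p'.coeff i'}
            ≤ Submodule.span K {x | ∃ i', i0 ≤ i' ∧ x = p.coeff i'} := by
        intro i0
        rw [Submodule.span_le]
        rintro x ⟨i', hi', rfl⟩
        refine Submodule.span_mono ?_ (hP' i')
        rintro y ⟨i'', hi'', rfl⟩
        exact ⟨i'', le_trans hi' hi'', rfl⟩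
      have htcoeff : ∀ i, t.coeff i
          ∈ Submodule.span K {x | ∃ i', i + gK.natDegree ≤ i' ∧ x = p.coeff i'} := by
        intro i
        rw [ht, Polynomial.coeff_C_mul, Polynomial.coeff_X_pow]
        by_cases hij : i = j
        · rw [if_pos hij, mul_one]
          refine Submodule.subset_span ⟨np, by omega, ?_⟩
          rw [hlc, ← Polynomial.coeff_natDegree]
        · rw [if_neg hij, mul_zero]
          exact Submodule.zero_mem _
      have hdeglt : p'.degree < p.degree :=
        Polynomial.degree_sub_lt htg_deg.symm hp0 htg_lc.symm
      by_cases hp'0 : p' = 0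
      · refine ⟨t, 0, ?_, ?_, htcoeff, ?_⟩
        · rw [add_zero]
          exact sub_eq_zero.mp hp'0 
        · rw [Polynomial.degree_zero]
          exact WithBot.bot_lt_coe _
        · intro i
          rw [Polynomial.coeff_zero]
          exact Submodule.zero_mem _
      · have hlt : p'.natDegree < n := by
          have h1 : p'.natDegree < p.natDegree :=
            Polynomial.natDegree_lt_natDegree hp'0 hdeglt
          omega
        obtain ⟨q', rem', heq, hrd, hq', hrem'⟩ := IH p' hlt
        refine ⟨q' + t, rem', ?_, hrd, ?_, ?_⟩
        · have hpp : p = p' + t * g := by rw [hp']; ring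
          rw [hpp, heq]; ring
        · intro i
          rw [Polynomial.coeff_add]
          exact add_mem (htrans (i + gK.natDegree) (hq' i)) (htcoeff i)
        · intro i
          exact htrans i (hrem' i)

end Division

section DivM

variable {K : Type*} [Field K] {m : ℕ}

lemma span_bound_totalDegree {N c : ℕ} {s : Set (MvPolynomial (Fin m) K)}
    (hgen : ∀ x ∈ s, x = 0 ∨ x.totalDegree + c ≤ N) :
    ∀ x ∈ Submodule.span K s, x = 0 ∨ x.totalDegree + c ≤ N := by
  intro x hx
  refine Submodule.span_induction (fun x h => hgen x h) (Or.inl rfl) ?_ ?_ hx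
  · rintro x y _ _ hx hy
    rcases hx with rfl | hx
    · simpa using hy
    rcases hy with rfl | hy
    · simpa using Or.inr hx
    · right
      have h3 := MvPolynomial.totalDegree_add x y
      have h4 := Nat.max_le.mp (le_refl (max x.totalDegree y.totalDegree))
      omega
  · rintro a x _ hx
    rcases hx with rfl | hx
    · exact Or.inl (smul_zero a)
    · right
      have h3 := MvPolynomial.totalDegree_smul_le a x
      omega

lemma span_bound_degreeOf {j : Fin m} {N : ℕ} {s : Set (MvPolynomial (Fin m) K)}
    (hgen : ∀ x ∈ s, degreeOf j x ≤ N) :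
    ∀ x ∈ Submodule.span K s, degreeOf j x ≤ N := by
  intro x hx
  refine Submodule.span_induction (fun x h => hgen x h) (by simp) ?_ ?_ hx
  · intro x y _ _ hx hy
    have h3 := MvPolynomial.degreeOf_add_le j x y
    have h4 := Nat.max_le.mp (le_refl (max (degreeOf j x) (degreeOf j y)))
    omega
  · intro a x _ hx
    have h3 : degreeOf j (a • x) ≤ degreeOf j x := by
      rw [MvPolynomial.smul_eq_C_mul]
      have h5 := MvPolynomial.degreeOf_mul_le j (C a) x
      have h0 := MvPolynomial.degreeOf_C a j
      omega
    omega

lemma eval_XK_as_sum (k : Fin m) (w : Polynomial (MvPolynomial (Fin m) K)) :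
    Polynomial.eval (X k : MvPolynomial (Fin m) K) w
      = ∑ i ∈ w.support, w.coeff i * X k ^ i := by
  conv_lhs => rw [Polynomial.as_sum_support w]
  rw [Polynomial.eval_finset_sum]
  exact Finset.sum_congr rfl fun i _ => Polynomial.eval_monomial

lemma support_eval_theta (k : Fin m) (w : Polynomial (MvPolynomial (Fin m) K)) :
    ∀ ν ∈ (Polynomial.eval (X k : MvPolynomial (Fin m) K) w).support,
      ∃ i ∈ w.support, ∃ ν1 ∈ (w.coeff i).support, ν = ν1 + Finsupp.single k i := by
  intro ν hν
  rw [eval_XK_as_sum] at hν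
  have hsub := MvPolynomial.support_sum (s := w.support)
    (f := fun i => w.coeff i * X k ^ i) hν
  obtain ⟨i, hi, hmem⟩ := Finset.mem_biUnion.mp hsub
  refine ⟨i, hi, ?_⟩
  have hmul := MvPolynomial.support_mul _ _ hmem
  obtain ⟨ν1, hν1, ν2, hν2, hνeq⟩ := Finset.mem_add.mp hmul
  have hν2' : ν2 = Finsupp.single k i := by
    rw [MvPolynomial.X_pow_eq_monomial] at hν2
    have hc := MvPolynomial.mem_support_iff.mp hν2
    rw [MvPolynomial.coeff_monomial] at hc
    by_contra hne
    exact hc (if_neg fun hh => hne hh.symm)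
  exact ⟨ν1, hν1, by rw [← hνeq, hν2']⟩

lemma divM (k : Fin m) (gK : Polynomial K) (hg : gK.Monic) (hd1 : 1 ≤ gK.natDegree)
    (p : MvPolynomial (Fin m) K) :
    ∃ h rem : MvPolynomial (Fin m) K,
      p = h * Polynomial.eval (X k : MvPolynomial (Fin m) K)
            (gK.map (C : K →+* MvPolynomial (Fin m) K)) + rem ∧
      (h = 0 ∨ h.totalDegree + gK.natDegree ≤ p.totalDegree) ∧
      rem.totalDegree ≤ p.totalDegree ∧
      degreeOf k rem < gK.natDegree ∧
      (∀ j, j ≠ k → degreeOf j rem ≤ degreeOf j p) := by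
  obtain ⟨q, rem, heq, hrd, hq, hrem⟩ :=
    divP gK hg ((theta k p).natDegree + 1) (theta k p) (lt_add_one _)
  have hback : p = Polynomial.eval (X k : MvPolynomial (Fin m) K) q *
      Polynomial.eval (X k : MvPolynomial (Fin m) K) (gK.map C) +
      Polynomial.eval (X k : MvPolynomial (Fin m) K) rem := by
    conv_lhs => rw [← theta_section k p]
    rw [heq, Polynomial.eval_add, Polynomial.eval_mul]
  have hqc : ∀ i, q.coeff i = 0 ∨
      (q.coeff i).totalDegree + (i + gK.natDegree) ≤ p.totalDegree := by
    intro i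
    refine span_bound_totalDegree ?_ _ (hq i)
    rintro x ⟨i', hi', rfl⟩
    rcases theta_coeff_totalDegree k p i' with h0 | hle
    · exact Or.inl h0
    · exact Or.inr (by omega)
  have hrc : ∀ i, rem.coeff i = 0 ∨
      (rem.coeff i).totalDegree + i ≤ p.totalDegree := by
    intro i
    refine span_bound_totalDegree ?_ _ (hrem i)
    rintro x ⟨i', hi', rfl⟩
    rcases theta_coeff_totalDegree k p i' with h0 | hle
    · exact Or.inl h0
    · exact Or.inr (by omega)
  have hrk : ∀ i, degreeOf k (rem.coeff i) = 0 := by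
    intro i
    refine Nat.eq_zero_of_le_zero (span_bound_degreeOf ?_ _ (hrem i))
    rintro x ⟨i', hi', rfl⟩
    exact le_of_eq (theta_coeff_degreeOf_self k p i')
  have hrj : ∀ j, j ≠ k → ∀ i, degreeOf j (rem.coeff i) ≤ degreeOf j p := by
    intro j hj i
    refine span_bound_degreeOf ?_ _ (hrem i)
    rintro x ⟨i', hi', rfl⟩
    exact theta_coeff_degreeOf_ne k j hj p i'
  refine ⟨_, _, hback, ?_, ?_, ?_, ?_⟩
  · by_cases hq0 : q = 0
    · left; rw [hq0, Polynomial.eval_zero]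
    · right
      have hsup : q.support.Nonempty := by
        rw [Finset.nonempty_iff_ne_empty]
        intro hh
        exact hq0 (Polynomial.support_eq_empty.mp hh)
      have hle : (Polynomial.eval (X k : MvPolynomial (Fin m) K) q).totalDegree
          ≤ q.support.sup fun i => (q.coeff i).totalDegree + i := by
        rw [eval_XK_as_sum]
        refine le_trans (MvPolynomial.totalDegree_finset_sum _ _)
          (Finset.sup_le fun i hi => le_trans ?_ (Finset.le_sup hi))
        calc (q.coeff i * X k ^ i).totalDegree
            ≤ (q.coeff i).totalDegree + (X k ^ i : MvPolynomial (Fin m) K).totalDegree :=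
              MvPolynomial.totalDegree_mul _ _
          _ = (q.coeff i).totalDegree + i := by rw [MvPolynomial.totalDegree_X_pow]
      obtain ⟨i0, hi0, hsupEq⟩ := Finset.exists_mem_eq_sup _ hsup
        fun i => (q.coeff i).totalDegree + i
      have hco : q.coeff i0 ≠ 0 := Polynomial.mem_support_iff.mp hi0
      rcases hqc i0 with h0 | hbound
      · exact absurd h0 hco
      · have h5 : (Polynomial.eval (X k : MvPolynomial (Fin m) K) q).totalDegree
            ≤ (q.coeff i0).totalDegree + i0 := by rw [← hsupEq]; exact hle
        omega
  · rw [eval_XK_as_sum]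
    refine le_trans (MvPolynomial.totalDegree_finset_sum _ _)
      (Finset.sup_le fun i hi => ?_)
    have hco := Polynomial.mem_support_iff.mp hi
    rcases hrc i with h0 | hb
    · exact absurd h0 hco
    calc (rem.coeff i * X k ^ i).totalDegree
        ≤ (rem.coeff i).totalDegree + (X k ^ i : MvPolynomial (Fin m) K).totalDegree :=
          MvPolynomial.totalDegree_mul _ _
      _ = (rem.coeff i).totalDegree + i := by rw [MvPolynomial.totalDegree_X_pow]
      _ ≤ p.totalDegree := hb
  · rw [MvPolynomial.degreeOf_lt_iff (by omega)]
    intro ν hν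
    obtain ⟨i, hi, ν1, hν1, rfl⟩ := support_eval_theta k rem ν hν
    have h1 : ν1 k = 0 := by
      have := MvPolynomial.degreeOf_le_iff.mp (le_of_eq (hrk i)) ν1 hν1
      omega
    have h2 : i < gK.natDegree := by
      have hrne : rem ≠ 0 := by
        intro h0; rw [h0] at hi; simp at hi
      have hN : i ≤ rem.natDegree :=
        Polynomial.le_natDegree_of_ne_zero (Polynomial.mem_support_iff.mp hi)
      have hNd : rem.natDegree < gK.natDegree :=
        (Polynomial.natDegree_lt_iff_degree_lt hrne).mpr hrd
      omega
    rw [Finsupp.add_apply, h1, Finsupp.single_eq_same]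
    omega
  · intro j hj
    rw [MvPolynomial.degreeOf_le_iff]
    intro ν hν
    obtain ⟨i, hi, ν1, hν1, rfl⟩ := support_eval_theta k rem ν hν
    have h1 := MvPolynomial.degreeOf_le_iff.mp (hrj j hj i) ν1 hν1
    rw [Finsupp.add_apply, Finsupp.single_apply, if_neg fun hh => hj hh.symm]
    omega

end DivM

section GPoly

variable {K : Type*} [Field K] {m : ℕ}

lemma eval_gU (j : Fin m) (SS : Finset K) (rr : ℕ) :
    Polynomial.eval (X j : MvPolynomial (Fin m) K)
      (((∏ a ∈ SS, (Polynomial.X - Polynomial.C a)) ^ rr).map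
        (C : K →+* MvPolynomial (Fin m) K))
      = (∏ a ∈ SS, (X j - C a)) ^ rr := by
  rw [Polynomial.eval_map]
  have h : Polynomial.eval₂ (C : K →+* MvPolynomial (Fin m) K) (X j)
        ((∏ a ∈ SS, (Polynomial.X - Polynomial.C a)) ^ rr)
      = Polynomial.eval₂RingHom (C : K →+* MvPolynomial (Fin m) K) (X j)
        ((∏ a ∈ SS, (Polynomial.X - Polynomial.C a)) ^ rr) := rfl
  rw [h, map_pow, map_prod]
  simp

lemma gU_monic (SS : Finset K) (rr : ℕ) :
    ((∏ a ∈ SS, (Polynomial.X - Polynomial.C a)) ^ rr : Polynomial K).Monic :=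
  Polynomial.Monic.pow (Polynomial.monic_prod_of_monic SS (fun a => Polynomial.X - Polynomial.C a)
    (fun a _ => Polynomial.monic_X_sub_C a)) rr

lemma gU_natDegree (SS : Finset K) (rr : ℕ) :
    ((∏ a ∈ SS, (Polynomial.X - Polynomial.C a)) ^ rr : Polynomial K).natDegree
      = rr * SS.card := by
  rw [Polynomial.natDegree_pow, Polynomial.natDegree_prod_of_monic _ _
    (fun a _ => Polynomial.monic_X_sub_C a)]
  simp [Polynomial.natDegree_X_sub_C]

lemma degreeOf_G_ne (j j' : Fin m) (h : j' ≠ j) (SS : Finset K) (rr : ℕ) :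
    degreeOf j' (((∏ a ∈ SS, (X j - C a)) ^ rr : MvPolynomial (Fin m) K)) = 0 := by
  have hmul : ∀ p q : MvPolynomial (Fin m) K,
      degreeOf j' p = 0 → degreeOf j' q = 0 → degreeOf j' (p * q) = 0 := by
    intro p q hp hq
    have := MvPolynomial.degreeOf_mul_le j' p q
    omega
  have hone : degreeOf j' (1 : MvPolynomial (Fin m) K) = 0 := by
    rw [← map_one (C : K →+* MvPolynomial (Fin m) K)]
    exact MvPolynomial.degreeOf_C 1 j'
  have hbase : degreeOf j' ((∏ a ∈ SS, (X j - C a)) : MvPolynomial (Fin m) K) = 0 := by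
    refine Finset.prod_induction _ (fun p => degreeOf j' p = 0) hmul hone ?_
    intro a _
    refine Nat.eq_zero_of_le_zero (MvPolynomial.degreeOf_le_iff.mpr fun ν hν => ?_)
    classical
    have hsub := MvPolynomial.support_sub _ (X j : MvPolynomial (Fin m) K) (C a) hν
    rcases Finset.mem_union.mp hsub with h1 | h1
    · rw [MvPolynomial.support_X] at h1
      rw [Finset.mem_singleton.mp h1, Finsupp.single_apply, if_neg fun hh => h hh.symm]
    · have hc := MvPolynomial.mem_support_iff.mp h1
      rw [MvPolynomial.coeff_C] at hc
      have hν0 : ν = 0 := by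
        by_contra hne
        exact hc (if_neg fun hh => hne hh.symm)
      rw [hν0]
      rfl
  induction rr with
  | zero => simpa using hone
  | succ n IH => rw [pow_succ]; exact hmul _ _ IH hbase

end GPoly

section Zvan

variable {K : Type*} [Field K] {m : ℕ}

lemma zvan (rk : ℕ) (SK : Finset K) (k : Fin m) (P : MvPolynomial (Fin m) K)
    (s : Fin m → K) (hs : s k ∈ SK) (jj : Fin m →₀ ℕ) (hjk : jj k < rk) :
    eval s (mvHasseDeriv jj (P * (∏ a ∈ SK, (X k - C a)) ^ rk)) = 0 := by
  set G : MvPolynomial (Fin m) K := (∏ a ∈ SK, (X k - C a)) ^ rk with hG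
  have h1 : mvHasseDeriv jj (P * G) = mvHasseDeriv (Finsupp.single k (jj k))
      (mvHasseDeriv (jj.erase k) (P * G)) := by
    rw [mvHasseDeriv_comp_single k (jj k) (jj.erase k) (Finsupp.erase_same),
      Finsupp.erase_add_single]
  have h2 : mvHasseDeriv (jj.erase k) (P * G) = mvHasseDeriv (jj.erase k) P * G := by
    refine mvHasseDeriv_mul_right _ _ _ fun j hj => ?_
    have hjk' : j ≠ k := by
      rw [Finsupp.support_erase] at hj
      exact Finset.ne_of_mem_erase hj
    exact degreeOf_G_ne k j hjk' _ _
  set P' := mvHasseDeriv (jj.erase k) P with hP'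
  rw [h1, h2, eval_theta k s, theta_hasseDeriv, ← hasseDeriv_map,
    ← Polynomial.taylor_coeff]
  have hWmul : Polynomial.map (eval s : MvPolynomial (Fin m) K →+* K) (theta k (P' * G))
      = Polynomial.map (eval s : MvPolynomial (Fin m) K →+* K) (theta k P') *
        (∏ a ∈ SK, (Polynomial.X - Polynomial.C a)) ^ rk := by
    rw [map_mul, Polynomial.map_mul]
    congr 1
    rw [hG, map_pow, map_prod, Polynomial.map_pow, Polynomial.map_prod]
    congr 1
    refine Finset.prod_congr rfl fun a _ => ?_
    rw [map_sub, Polynomial.map_sub]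
    congr 1
    · simp [theta]
    · simp [theta]
  rw [hWmul]
  have hdvd : (Polynomial.X : Polynomial K) ^ rk ∣
      Polynomial.taylor (s k) (Polynomial.map (eval s : MvPolynomial (Fin m) K →+* K)
        (theta k P') * (∏ a ∈ SK, (Polynomial.X - Polynomial.C a)) ^ rk) := by
    rw [show Polynomial.taylor (s k) (Polynomial.map (eval s : MvPolynomial (Fin m) K →+* K)
        (theta k P') * (∏ a ∈ SK, (Polynomial.X - Polynomial.C a)) ^ rk)
      = Polynomial.taylorAlgHom (s k) (Polynomial.map (eval s) (theta k P') *
        (∏ a ∈ SK, (Polynomial.X - Polynomial.C a)) ^ rk) from rfl]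
    rw [map_mul, map_pow, map_prod]
    have hfac : (Polynomial.taylorAlgHom (s k)) (Polynomial.X - Polynomial.C (s k))
        = Polynomial.X := by
      show Polynomial.taylor (s k) (Polynomial.X - Polynomial.C (s k)) = Polynomial.X
      rw [map_sub, Polynomial.taylor_X, Polynomial.taylor_C]
      ring
    have h5 : (Polynomial.X : Polynomial K) ∣
        ∏ a ∈ SK, (Polynomial.taylorAlgHom (s k)) (Polynomial.X - Polynomial.C a) := by
      have hd := Finset.dvd_prod_of_mem
        (fun a => (Polynomial.taylorAlgHom (s k)) (Polynomial.X - Polynomial.C a)) hs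
      simpa only [hfac] using hd
    exact (pow_dvd_pow_of_dvd h5 rk).mul_left _
  rw [Polynomial.X_pow_dvd_iff] at hdvd
  exact hdvd _ hjk
end Zvan

section ZeroLem

variable {K : Type*} [Field K] {m : ℕ}

lemma zeroLem (r : Fin m → ℕ) (hr : ∀ j, 0 < r j) (S : Fin m → Finset K)
    (hS : ∀ j, (S j).Nonempty) (T : Finset (Fin m)) :
    ∀ R : MvPolynomial (Fin m) K,
      (∀ j ∈ T, degreeOf j R < r j * (S j).card) →
      (∀ s : Fin m → K, (∀ j ∈ T, s j ∈ S j) →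
        ∀ jj : Fin m →₀ ℕ, (∀ j ∉ T, jj j = 0) → (∀ j, jj j < r j) →
          pe T s (mvHasseDeriv jj R) = 0) →
      R = 0 := by
  induction T using Finset.induction_on with
  | empty =>
    intro R _ hvan
    have h := hvan (fun _ => 0) (by simp) 0 (by simp) (fun j => hr j)
    rwa [mvHasseDeriv_zero_index, pe_empty] at h
  | @insert k T' hk IH =>
    intro R hdeg hvan
    refine IH R (fun j hj => hdeg j (Finset.mem_insert_of_mem hj)) ?_
    intro s' hs' jj' hjsupp hjlt
    have hjk0 : jj' k = 0 := hjsupp k hk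
    set B := Polynomial.map (pe T' s').toRingHom (theta k (mvHasseDeriv jj' R)) with hB
    have hAB : theta k (pe T' s' (mvHasseDeriv jj' R)) = B := theta_comm_pe k T' hk s' _
    have hvan2 : ∀ a ∈ S k, ∀ t, t < r k →
        (Polynomial.hasseDeriv t B).eval (C a : MvPolynomial (Fin m) K) = 0 := by
      intro a ha t ht
      rw [hB, hasseDeriv_map, ← theta_hasseDeriv,
        mvHasseDeriv_comp_single k t jj' hjk0, pe_insert_eval k T' hk s' a]
      refine hvan _ ?_ _ ?_ ?_
      · intro j hj
        rcases Finset.mem_insert.mp hj with rfl | hj'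
        · rwa [Function.update_self]
        · have hjk2 : j ≠ k := fun hh => hk (by rw [← hh]; exact hj')
          rw [Function.update_of_ne hjk2]
          exact hs' j hj'
      · intro j hj
        have hj1 : j ∉ T' := fun hh => hj (Finset.mem_insert_of_mem hh)
        have hj2 : j ≠ k := fun hh => hj (by rw [hh]; exact Finset.mem_insert_self k T')
        rw [Finsupp.add_apply, hjsupp j hj1, Finsupp.single_apply,
          if_neg fun hh => hj2 hh.symm]
        omega
      · intro j
        by_cases hjk : j = k
        · subst hjk
          rw [Finsupp.add_apply, hjk0, Finsupp.single_eq_same]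
          omega
        · rw [Finsupp.add_apply, Finsupp.single_apply, if_neg fun hh => hjk hh.symm]
          have := hjlt j
          omega
    have hdvd : ∀ a ∈ S k,
        (Polynomial.X - Polynomial.C (C a : MvPolynomial (Fin m) K)) ^ (r k) ∣ B := by
      intro a ha
      have hX : (Polynomial.X : Polynomial (MvPolynomial (Fin m) K)) ^ (r k) ∣
          Polynomial.taylor (C a : MvPolynomial (Fin m) K) B := by
        rw [Polynomial.X_pow_dvd_iff]
        intro d hd
        rw [Polynomial.taylor_coeff]
        exact hvan2 a ha d hd
      obtain ⟨w, hw⟩ := hX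
      refine ⟨Polynomial.taylor (-(C a : MvPolynomial (Fin m) K)) w, ?_⟩
      have hBt : B = Polynomial.taylor (-(C a : MvPolynomial (Fin m) K))
          (Polynomial.taylor (C a : MvPolynomial (Fin m) K) B) := by
        rw [Polynomial.taylor_taylor, neg_add_cancel, Polynomial.taylor_zero]
      rw [hBt, hw]
      rw [show Polynomial.taylor (-(C a : MvPolynomial (Fin m) K))
            ((Polynomial.X : Polynomial (MvPolynomial (Fin m) K)) ^ (r k) * w)
          = Polynomial.taylorAlgHom (-(C a : MvPolynomial (Fin m) K))
            ((Polynomial.X : Polynomial (MvPolynomial (Fin m) K)) ^ (r k) * w) from rfl]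
      rw [map_mul, map_pow]
      have hXt : Polynomial.taylorAlgHom (-(C a : MvPolynomial (Fin m) K)) Polynomial.X
          = Polynomial.X - Polynomial.C (C a : MvPolynomial (Fin m) K) := by
        show Polynomial.taylor _ Polynomial.X = _
        rw [Polynomial.taylor_X, map_neg]
        ring
      rw [hXt]
      rfl
    have hprod : (∏ a ∈ S k,
        (Polynomial.X - Polynomial.C (C a : MvPolynomial (Fin m) K)) ^ (r k)) ∣ B := by
      refine Finset.prod_dvd_of_coprime ?_ fun a ha => hdvd a ha
      intro a ha b hb hab
      refine IsCoprime.pow ?_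
      have hne : (a : K) - b ≠ 0 := sub_ne_zero.mpr hab
      refine ⟨Polynomial.C (C (-(a - b)⁻¹) : MvPolynomial (Fin m) K),
        Polynomial.C (C ((a - b)⁻¹) : MvPolynomial (Fin m) K), ?_⟩
      have h1 : Polynomial.C (C (-(a - b)⁻¹) : MvPolynomial (Fin m) K) *
            (Polynomial.X - Polynomial.C (C a)) +
          Polynomial.C (C ((a - b)⁻¹) : MvPolynomial (Fin m) K) *
            (Polynomial.X - Polynomial.C (C b))
          = Polynomial.C (C ((a - b)⁻¹) : MvPolynomial (Fin m) K) *
            (Polynomial.C (C a : MvPolynomial (Fin m) K) - Polynomial.C (C b)) := by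
        rw [map_neg, map_neg]
        ring
      rw [h1, ← map_sub, ← map_sub, ← map_mul, ← map_mul, inv_mul_cancel₀ hne,
        map_one, map_one]
    by_cases hB0 : B = 0
    · refine theta_injective k ?_
      rw [hAB, hB0, map_zero]
    · exfalso
      have hpd : (∏ a ∈ S k,
          (Polynomial.X - Polynomial.C (C a : MvPolynomial (Fin m) K)) ^ (r k)).natDegree
          = (S k).card * r k := by
        rw [Polynomial.natDegree_prod_of_monic _ _
          (fun a _ => (Polynomial.monic_X_sub_C _).pow _)]
        rw [Finset.sum_congr rfl (fun a _ => by
          rw [Polynomial.natDegree_pow, Polynomial.natDegree_X_sub_C, mul_one])]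
        rw [Finset.sum_const, smul_eq_mul]
      have hle := Polynomial.natDegree_le_of_dvd hprod hB0
      have hBdeg : B.natDegree ≤ degreeOf k R := by
        rw [hB]
        refine le_trans Polynomial.natDegree_map_le ?_
        exact le_trans (natDegree_theta_le _ _) (degreeOf_mvHasseDeriv_le _ _ _)
      have hdegR := hdeg k (Finset.mem_insert_self k T')
      rw [hpd] at hle
      have := Nat.mul_comm (S k).card (r k)
      omega

end ZeroLem

section Main

variable {K : Type*} [Field K] {m : ℕ}

lemma iterDiv (r : Fin m → ℕ) (hr : ∀ j, 0 < r j) (S : Fin m → Finset K)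
    (hS : ∀ j, (S j).Nonempty) (T : Finset (Fin m)) (F : MvPolynomial (Fin m) K) :
    ∃ (H : Fin m → MvPolynomial (Fin m) K) (R : MvPolynomial (Fin m) K),
      F = (∑ j ∈ T, H j * (∏ a ∈ S j, (X j - C a)) ^ (r j)) + R ∧
      (∀ j, H j = 0 ∨ (H j).totalDegree + r j * (S j).card ≤ F.totalDegree) ∧
      R.totalDegree ≤ F.totalDegree ∧
      (∀ j ∈ T, degreeOf j R < r j * (S j).card) ∧
      (∀ j, j ∉ T → degreeOf j R ≤ degreeOf j F) := by
  induction T using Finset.induction_on with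
  | empty =>
    exact ⟨fun _ => 0, F, by simp, fun j => Or.inl rfl, le_rfl, by simp, fun j _ => le_rfl⟩
  | @insert k T' hk IH =>
    obtain ⟨H, R1, heq, hH, hRt, hRd, hRall⟩ := IH
    set gK := (∏ a ∈ S k, (Polynomial.X - Polynomial.C a)) ^ (r k) with hgK
    have hmon := gU_monic (S k) (r k)
    have hnd : gK.natDegree = r k * (S k).card := gU_natDegree _ _
    have hd1 : 1 ≤ gK.natDegree := by
      rw [hnd]
      exact Nat.mul_pos (hr k) ((hS k).card_pos)
    obtain ⟨h, R, heq2, hh, hRt2, hRk, hRj⟩ := divM k gK hmon hd1 R1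
    rw [hgK, eval_gU] at heq2
    refine ⟨Function.update H k h, R, ?_, ?_, le_trans hRt2 hRt, ?_, ?_⟩
    · rw [Finset.sum_insert hk, Function.update_self]
      have hsum : (∑ j ∈ T', Function.update H k h j * (∏ a ∈ S j, (X j - C a)) ^ (r j))
          = ∑ j ∈ T', H j * (∏ a ∈ S j, (X j - C a)) ^ (r j) :=
        Finset.sum_congr rfl fun j hj => by
          rw [Function.update_of_ne (ne_of_mem_of_not_mem hj hk)]
      rw [hsum, heq, heq2]
      ring
    · intro j
      by_cases hjk : j = k
      · subst hjk
        rw [Function.update_self]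
        rcases hh with h0 | hb
        · exact Or.inl h0
        · right
          rw [hnd] at hb
          omega
      · rw [Function.update_of_ne hjk]
        exact hH j
    · intro j hj
      rcases Finset.mem_insert.mp hj with rfl | hj'
      · rwa [hnd] at hRk
      · exact lt_of_le_of_lt (hRj j (ne_of_mem_of_not_mem hj' hk)) (hRd j hj')
    · intro j hj
      have hj1 : j ∉ T' := fun hh => hj (Finset.mem_insert_of_mem hh)
      have hj2 : j ≠ k := fun hh => hj (by rw [hh]; exact Finset.mem_insert_self k T')
      exact le_trans (hRj j hj2) (hRall j hj1)

end Main

/-- Decomposition for coordinatewise multiplicities: if all Hasse derivatives of `F` of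
multiindex coordinatewise below `r` vanish on the grid, then `F = Σ H_j G_j^{r_j}`
with degree control. -/
theorem decomposition_coordinatewise_multiplicities {K : Type*} [Field K] {m : ℕ}
    (r : Fin m → ℕ) (hr : ∀ j, 0 < r j) (S : Fin m → Finset K)
    (F : MvPolynomial (Fin m) K)
    (hF : ∀ s : Fin m → K, (∀ j, s j ∈ S j) →
      ∀ jj : Fin m →₀ ℕ, (∀ k, jj k < r k) →
        MvPolynomial.eval s (mvHasseDeriv jj F) = 0) :
    ∃ H : Fin m → MvPolynomial (Fin m) K,
      (∀ j, H j = 0 ∨ (H j).totalDegree + r j * (S j).card ≤ F.totalDegree) ∧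
      F = ∑ j, H j * (∏ s ∈ S j, (X j - C s)) ^ (r j) := by
  classical
  by_cases hS : ∀ j, (S j).Nonempty
  · obtain ⟨H, R, heq, hH, _, hRd, _⟩ := iterDiv r hr S hS Finset.univ F
    have hRdef : R = F - ∑ j, H j * (∏ a ∈ S j, (X j - C a)) ^ (r j) := by
      rw [heq]; ring
    have hR0 : R = 0 := by
      refine zeroLem r hr S hS Finset.univ R (fun j _ => hRd j (Finset.mem_univ j)) ?_
      intro s hs jj _ hjlt
      have hDR : mvHasseDeriv jj R = mvHasseDeriv jj F
          - ∑ j, mvHasseDeriv jj (H j * (∏ a ∈ S j, (X j - C a)) ^ (r j)) := by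
        rw [hRdef]
        show mvD jj (F - ∑ j, H j * (∏ a ∈ S j, (X j - C a)) ^ (r j)) = _
        rw [map_sub, map_sum]
        rfl
      have hz : eval s (mvHasseDeriv jj R) = 0 := by
        rw [hDR, map_sub, map_sum, hF s (fun j => hs j (Finset.mem_univ j)) jj hjlt]
        rw [Finset.sum_eq_zero fun j _ =>
          zvan (r j) (S j) j (H j) s (hs j (Finset.mem_univ j)) jj (hjlt j)]
        simp
      rw [pe_univ, hz, map_zero]
    rw [hR0, add_zero] at heq
    exact ⟨H, hH, heq⟩
  · push_neg at hS
    obtain ⟨k, hke⟩ := hS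
    have hSk : S k = ∅ := hke
    refine ⟨Function.update (fun _ => 0) k F, ?_, ?_⟩
    · intro j
      by_cases hjk : j = k
      · subst hjk
        rw [Function.update_self]
        right
        rw [hSk]
        simp
      · rw [Function.update_of_ne hjk]
        exact Or.inl rfl
    · have hsum : (∑ j, Function.update (fun _ => (0 : MvPolynomial (Fin m) K)) k F j *
          (∏ s ∈ S j, (X j - C s)) ^ (r j))
          = F * (∏ s ∈ S k, (X k - C s)) ^ (r k) := by
        rw [Finset.sum_eq_single k]
        · rw [Function.update_self]
        · intro j _ hjk
          rw [Function.update_of_ne hjk, zero_mul]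
        · intro hcon
          exact absurd (Finset.mem_univ k) hcon
      rw [hsum, hSk]
      simp
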